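/- Let s(n) = Σ_{i=1}^{k} a_i r_i^n with r_i pairwise distinct and a_i nonzero, and fix offsets φ_0 < φ_1 < … < φ_{k-1} in ℕ such that the k×k matrix Φ with Φ[p,i] = r_i^{φ_p} is invertible. For l ∈ {0,…,k} let B_l be the k×k matrix whose columns are the vectors (s(φ_0 + m), s(φ_1 + m), …, s(φ_{k-1} + m))ᵀ for m ∈ {0,…,k} \ {k−l}. Then det(B_l)/det(B_0) = e_l(r_1,…,r_k), independently of the choice of offsets φ. -/

import Mathlib

open Finset Polynomial Matrix

lemma prod_Ioi_castSucc' {M : Type*} [CommMonoid M] {n : ℕ} (i : Fin n) (f : Fin (n+1) → M) :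
    ∏ j ∈ Ioi (i.castSucc), f j = f (Fin.last n) * ∏ j ∈ Ioi i, f j.castSucc := by
  have h : Ioi (i.castSucc) = insert (Fin.last n) ((Ioi i).map Fin.castSuccEmb) := by
    ext j
    simp only [mem_Ioi, mem_insert, mem_map, Fin.castSuccEmb_apply]
    constructor
    · intro hj
      rcases Fin.eq_castSucc_or_eq_last j with ⟨j', rfl⟩ | rfl
      · exact Or.inr ⟨j', by simpa [Fin.castSucc_lt_castSucc_iff] using hj, rfl⟩
      · exact Or.inl rfl
    · rintro (rfl | ⟨j', hj', rfl⟩)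
      · exact Fin.castSucc_lt_last i
      · exact Fin.castSucc_lt_castSucc_iff.2 hj'
  rw [h, prod_insert, prod_map]
  · rfl
  · intro hmem
    obtain ⟨j', -, hc⟩ := mem_map.1 hmem
    exact (Fin.castSucc_lt_last j').ne hc

lemma det_vandermonde_snoc' {R : Type*} [CommRing R] {n : ℕ} (u : Fin n → R) (x : R) :
    (vandermonde (Fin.snoc u x)).det = (∏ i : Fin n, (x - u i)) * (vandermonde u).det := by
  rw [det_vandermonde, det_vandermonde, Fin.prod_univ_castSucc]
  have hlast : (Ioi (Fin.last n)) = (∅ : Finset (Fin (n+1))) := by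
    ext j; simp [not_lt.2 (Fin.le_last j)]
  rw [hlast, Finset.prod_empty, mul_one]
  have h : ∀ i : Fin n, ∏ j ∈ Ioi (i.castSucc), ((Fin.snoc u x : Fin (n+1) → R) j
      - (Fin.snoc u x : Fin (n+1) → R) i.castSucc)
      = (x - u i) * ∏ j ∈ Ioi i, (u j - u i) := by
    intro i
    rw [prod_Ioi_castSucc']
    simp [Fin.snoc_last, Fin.snoc_castSucc]
  simp only [h]
  rw [Finset.prod_mul_distrib]

lemma map_C_det {k : ℕ} (M : Matrix (Fin k) (Fin k) ℂ) :
    (M.map (⇑(C : ℂ →+* ℂ[X]))).det = C M.det := by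
  rw [RingHom.map_det, RingHom.mapMatrix_apply]

lemma det_skip (k : ℕ) (r : Fin k → ℂ) (m : Fin (k+1)) :
    (Matrix.of fun (i : Fin k) (q : Fin k) => r i ^ ((m.succAbove q : ℕ))).det =
    (∑ t ∈ Finset.powersetCard (k - (m : ℕ)) (Finset.univ : Finset (Fin k)), ∏ i ∈ t, r i)
      * (vandermonde r).det := by
  set w : Fin (k+1) → ℂ[X] := Fin.snoc (fun i => C (r i)) X with hw
  set D : Fin (k+1) → ℂ :=
    fun j => (Matrix.of fun (i : Fin k) (q : Fin k) => r i ^ ((j.succAbove q : ℕ))).det with hD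
  set e : ℂ := ∑ t ∈ Finset.powersetCard (k - (m : ℕ)) (Finset.univ : Finset (Fin k)),
    ∏ i ∈ t, r i with he
  set V : ℂ := (vandermonde r).det with hV
  have h1 : (vandermonde w).det = (∏ i : Fin k, (X - C (r i))) * C V := by
    rw [hw, det_vandermonde_snoc']
    congr 1
    have h : vandermonde (fun i => C (r i)) = (vandermonde r).map (⇑(C : ℂ →+* ℂ[X])) := by
      ext i j; simp [vandermonde_apply, Matrix.map_apply]
    rw [h, map_C_det]
  have h2 : (vandermonde w).det = ∑ j : Fin (k+1), C ((-1 : ℂ) ^ ((k : ℕ) + (j : ℕ)) * D j)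
      * X ^ (j : ℕ) := by
    rw [det_succ_row _ (Fin.last k)]
    refine Finset.sum_congr rfl fun j _ => ?_
    have hentry : vandermonde w (Fin.last k) j = X ^ (j : ℕ) := by
      simp [vandermonde_apply, hw, Fin.snoc_last]
    have hsub : (vandermonde w).submatrix (Fin.last k).succAbove j.succAbove
        = ((Matrix.of fun (i : Fin k) (q : Fin k) => r i ^ ((j.succAbove q : ℕ))).map
            (⇑(C : ℂ →+* ℂ[X]))) := by
      ext p q
      simp [Matrix.submatrix_apply, vandermonde_apply, Fin.succAbove_last, hw,
        Fin.snoc_castSucc, Matrix.map_apply]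
    rw [hentry, hsub, map_C_det]
    simp only [Fin.val_last, hD, C_mul, C_pow, C_neg, C_1]
    ring
  have hcoeff := congrArg (fun p => Polynomial.coeff p (m : ℕ)) (h2.symm.trans h1)
  simp only [Polynomial.finset_sum_coeff, Polynomial.coeff_C_mul_X_pow,
    Polynomial.coeff_mul_C] at hcoeff
  rw [Finset.sum_eq_single m] at hcoeff
  · rw [if_pos rfl] at hcoeff
    -- compute the coefficient of the product side
    have hprod : (∏ i : Fin k, (X - C (r i))).coeff (m : ℕ) =
        (-1 : ℂ) ^ (k - (m : ℕ)) * e := by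
      have hcard : Multiset.card ((univ : Finset (Fin k)).val.map r) = k := by
        simp
      have hmle : (m : ℕ) ≤ Multiset.card ((univ : Finset (Fin k)).val.map r) := by
        rw [hcard]; exact Fin.is_le m
      have h := Multiset.prod_X_sub_C_coeff ((univ : Finset (Fin k)).val.map r) hmle
      rw [hcard] at h
      have hrewrite : (∏ i : Fin k, (X - C (r i))) =
          (((univ : Finset (Fin k)).val.map r).map fun t => X - C t).prod := by
        rw [Multiset.map_map]; rfl
      rw [hrewrite, h, Finset.esymm_map_val, he]
    rw [hprod] at hcoeff
    have hone : ((-1 : ℂ) ^ ((k : ℕ) + (m : ℕ))) * ((-1 : ℂ) ^ ((k : ℕ) + (m : ℕ))) = 1 := by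
      rw [← pow_add]
      exact Even.neg_one_pow ⟨(k : ℕ) + (m : ℕ), by ring⟩
    have hone2 : ((-1 : ℂ) ^ ((k : ℕ) + (m : ℕ))) * ((-1 : ℂ) ^ ((k : ℕ) - (m : ℕ))) = 1 := by
      rw [← pow_add]
      refine Even.neg_one_pow ⟨k, by omega⟩
    calc D m = (((-1 : ℂ) ^ ((k : ℕ) + (m : ℕ))) * ((-1 : ℂ) ^ ((k : ℕ) + (m : ℕ)))) * D m := by
          rw [hone, one_mul]
      _ = ((-1 : ℂ) ^ ((k : ℕ) + (m : ℕ))) * (((-1 : ℂ) ^ ((k : ℕ) + (m : ℕ))) * D m) := by ring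
      _ = ((-1 : ℂ) ^ ((k : ℕ) + (m : ℕ))) * ((-1 : ℂ) ^ ((k : ℕ) - (m : ℕ)) * e * V) := by
          rw [hcoeff]
      _ = (((-1 : ℂ) ^ ((k : ℕ) + (m : ℕ))) * ((-1 : ℂ) ^ ((k : ℕ) - (m : ℕ)))) * (e * V) := by
          ring
      _ = e * V := by rw [hone2, one_mul]
  · intro j _ hj
    rw [if_neg]
    exact fun hc => hj (Fin.ext hc.symm)
  · intro h
    exact absurd (Finset.mem_univ m) h

/-- Theorem 2 (general, non-consecutive sampling): for any strictly increasing
offsets `φ` with invertible `Φ`, the determinant quotients of the combinatorial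
matrices equal the elementary symmetric polynomials of the common ratios. -/
theorem gsd_volume_quotients_general (k : ℕ) (a r : Fin k → ℂ)
    (hr : Function.Injective r) (ha : ∀ i, a i ≠ 0)
    (s : ℕ → ℂ) (hs : ∀ n, s n = ∑ i : Fin k, a i * r i ^ n)
    (φ : Fin k → ℕ) (hφ : StrictMono φ)
    (hΦ : IsUnit (Matrix.of fun (p : Fin k) (i : Fin k) => r i ^ φ p))
    (B : ℕ → Matrix (Fin k) (Fin k) ℂ)
    (hB : ∀ l, B l = Matrix.of fun (p : Fin k) (q : Fin k) =>
      s (φ p + (if (q : ℕ) < k - l then (q : ℕ) else (q : ℕ) + 1)))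
    (l : ℕ) (hl : l ≤ k) :
    (B l).det / (B 0).det =
      ∑ t ∈ Finset.powersetCard l (Finset.univ : Finset (Fin k)), ∏ i ∈ t, r i := by
  set Φm : Matrix (Fin k) (Fin k) ℂ := Matrix.of fun (p : Fin k) (i : Fin k) => r i ^ φ p with hΦm
  set V : ℂ := (vandermonde r).det with hV
  have hVne : V ≠ 0 := Matrix.det_vandermonde_ne_zero_iff.2 hr
  -- factorization of determinants
  have hfac : ∀ l' : ℕ, (B l').det = (Φm.det * ∏ i, a i) *
      (Matrix.of fun (i : Fin k) (q : Fin k) =>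
        r i ^ (if (q : ℕ) < k - l' then (q : ℕ) else (q : ℕ) + 1)).det := by
    intro l'
    have hBe : B l' = Φm * (Matrix.of fun (i : Fin k) (q : Fin k) =>
        a i * r i ^ (if (q : ℕ) < k - l' then (q : ℕ) else (q : ℕ) + 1)) := by
      rw [hB l']
      ext p q
      simp only [Matrix.mul_apply, Matrix.of_apply, hs, hΦm]
      refine Finset.sum_congr rfl fun i _ => ?_
      rw [pow_add]; ring
    rw [hBe, Matrix.det_mul, mul_assoc]
    congr 1
    exact Matrix.det_mul_column a _
  -- the l = 0 matrix is the Vandermonde matrix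
  have hW0 : (Matrix.of fun (i : Fin k) (q : Fin k) =>
      r i ^ (if (q : ℕ) < k - 0 then (q : ℕ) else (q : ℕ) + 1)).det = V := by
    rw [hV]
    congr 1
    ext i q
    simp [vandermonde_apply, q.isLt]
  -- the general matrix via det_skip
  have hm : (k - l) < k + 1 := by omega
  have hWl : (Matrix.of fun (i : Fin k) (q : Fin k) =>
      r i ^ (if (q : ℕ) < k - l then (q : ℕ) else (q : ℕ) + 1)).det =
      (∑ t ∈ Finset.powersetCard l (Finset.univ : Finset (Fin k)), ∏ i ∈ t, r i) * V := by
    have h := det_skip k r ⟨k - l, hm⟩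
    have hsucc : ∀ q : Fin k, (((⟨k - l, hm⟩ : Fin (k+1)).succAbove q : ℕ)) =
        (if (q : ℕ) < k - l then (q : ℕ) else (q : ℕ) + 1) := by
      intro q
      rw [Fin.succAbove]
      split_ifs with h1 h2 h2
      · rfl
      · exact absurd (by simpa [Fin.lt_def] using h1) h2
      · exact absurd (by simpa [Fin.lt_def] using h2) h1
      · rfl
    simp only [hsucc] at h
    have hkl : k - ((⟨k - l, hm⟩ : Fin (k+1)) : ℕ) = l := by
      show k - (k - l) = l
      omega
    rw [hkl] at h
    exact h
  have hcne : Φm.det * ∏ i, a i ≠ 0 := by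
    exact mul_ne_zero (hΦ.map (Matrix.detMonoidHom)).ne_zero (Finset.prod_ne_zero_iff.2
      fun i _ => ha i)
  rw [hfac l, hfac 0, hW0, hWl, mul_div_mul_left _ _ hcne, mul_div_cancel_right₀ _ hVne]
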